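/- Let $\mu_l, r, \lambda, n > 0$ with $a = \frac{(1+r)\lambda}{n\mu_l} \neq 1$, and let $L \geq 1$ be an integer. Suppose reals $\bar{X}^C_0 \leq \bar{X}^C_1 \leq \cdots \leq \bar{X}^C_L$ and $\bar{X}^B_L \geq 0$ satisfy $n \leq \frac{r+1}{r}\bar{X}^C_L$, $\bar{X}^C_j - \bar{X}^C_{j-1} \leq a^{L-j}(\bar{X}^C_L - \bar{X}^C_{L-1})$ for $1 \leq j \leq L-1$, and $\bar{X}^C_0 \leq a^L(\bar{X}^C_L - \bar{X}^C_{L-1})$. Then $\bar{X}^C_L - \bar{X}^C_{L-1} \geq \frac{n r}{1+r} \cdot \frac{1 - a}{1 - a^{L+1}}$. -/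
import Mathlib


theorem closest_dispatch_gap
    (μl r lam n : ℝ) (hμ : 0 < μl) (hr : 0 < r) (hlam : 0 < lam) (hn : 0 < n)
    (L : ℕ) (hL : 1 ≤ L)
    (a : ℝ) (ha : a = (1 + r) * lam / (n * μl)) (hane : a ≠ 1)
    (XC : ℕ → ℝ) (XB : ℝ) (hXB : 0 ≤ XB)
    (hmono : ∀ j, j < L → XC j ≤ XC (j + 1))
    (hn' : n ≤ (r + 1) / r * XC L)
    (hdiff : ∀ j, 1 ≤ j → j ≤ L - 1 →
      XC j - XC (j - 1) ≤ a ^ (L - j) * (XC L - XC (L - 1)))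
    (h0 : XC 0 ≤ a ^ L * (XC L - XC (L - 1))) :
    XC L - XC (L - 1) ≥ n * r / (1 + r) * ((1 - a) / (1 - a ^ (L + 1))) := by
  have ha0 : 0 < a := by
    rw [ha]; positivity
  set g := XC L - XC (L - 1) with hg
  have hgap0 : 0 ≤ g := by
    have h1 : L - 1 < L := Nat.sub_lt hL one_pos
    have := hmono (L - 1) h1
    rw [Nat.sub_add_cancel hL] at this
    linarith
  have hterm : ∀ j ∈ Finset.range L, XC (j + 1) - XC j ≤ a ^ (L - 1 - j) * g := by
    intro j hj
    rw [Finset.mem_range] at hj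
    rcases eq_or_lt_of_le (Nat.succ_le_of_lt hj) with h | h
    · -- j + 1 = L
      have hj1 : j = L - 1 := by omega
      have : L - 1 - j = 0 := by omega
      rw [this, pow_zero, one_mul, hj1, Nat.sub_add_cancel hL]
    · have h1 : 1 ≤ j + 1 := le_add_self
      have h2 : j + 1 ≤ L - 1 := by omega
      have := hdiff (j + 1) h1 h2
      simpa [Nat.add_sub_cancel, show L - (j + 1) = L - 1 - j by omega] using this
  have hsum : XC L - XC 0 = ∑ j ∈ Finset.range L, (XC (j + 1) - XC j) :=
    (Finset.sum_range_sub XC L).symm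
  have hrefl : ∑ j ∈ Finset.range L, a ^ (L - 1 - j) * g
      = ∑ j ∈ Finset.range L, a ^ j * g := by
    exact Finset.sum_range_reflect (fun j => a ^ j * g) L
  have hS : XC L ≤ (∑ k ∈ Finset.range (L + 1), a ^ k) * g := by
    have h1 : XC L = XC 0 + ∑ j ∈ Finset.range L, (XC (j + 1) - XC j) := by
      rw [← hsum]; ring
    have h2 : ∑ j ∈ Finset.range L, (XC (j + 1) - XC j)
        ≤ ∑ j ∈ Finset.range L, a ^ (L - 1 - j) * g :=
      Finset.sum_le_sum hterm
    have h3 : (∑ k ∈ Finset.range (L + 1), a ^ k) * g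
        = a ^ L * g + ∑ j ∈ Finset.range L, a ^ (L - 1 - j) * g := by
      rw [hrefl, Finset.sum_range_succ, add_mul, Finset.sum_mul]
      ring
    rw [h1, h3]
    linarith
  set S := ∑ k ∈ Finset.range (L + 1), a ^ k with hSdef
  have hSpos : 0 < S := by
    apply Finset.sum_pos
    · intro i _; positivity
    · exact ⟨0, Finset.mem_range.mpr (Nat.succ_pos L)⟩
  have hXL : n * r / (1 + r) ≤ XC L := by
    rw [div_le_iff₀ (by linarith : (0:ℝ) < 1 + r)]
    have h := hn'
    rw [div_mul_eq_mul_div, le_div_iff₀ hr] at h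
    nlinarith
  have hgeom : S = (a ^ (L + 1) - 1) / (a - 1) := geom_sum_eq hane (L + 1)
  have hane' : a - 1 ≠ 0 := sub_ne_zero.mpr hane
  have hkey : (1 - a) / (1 - a ^ (L + 1)) = 1 / S := by
    have hSa : S * (a - 1) = a ^ (L + 1) - 1 := by
      rw [hgeom, div_mul_cancel₀ _ hane']
    have hne : a ^ (L + 1) - 1 ≠ 0 := by
      rw [← hSa]
      exact mul_ne_zero (ne_of_gt hSpos) hane'
    rw [show (1 - a) = -(a - 1) by ring, show (1 - a ^ (L + 1)) = -(a ^ (L + 1) - 1) by ring,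
      neg_div_neg_eq, ← hSa, mul_comm S, ← div_div, div_self hane']
  rw [hkey]
  have hC : 0 < n * r / (1 + r) := by positivity
  rw [ge_iff_le, mul_one_div, div_le_iff₀ hSpos]
  calc n * r / (1 + r) ≤ XC L := hXL
    _ ≤ S * g := hS
    _ = g * S := mul_comm _ _
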